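/- If a finite Borel measure μ on ℝ fails the Steinhaus property, then there exists a compact set A ⊆ ℝ with μ(A) > 0 and Lebesgue measure m(A) = 0. -/

import Mathlib

open MeasureTheory Set Pointwise

def HasSP (μ : Measure ℝ) : Prop :=
  ∀ A : Set ℝ, MeasurableSet A → 0 < μ A → ∃ ε > 0, Set.Ioo (-ε) ε ⊆ A - A

theorem exists_compact_null_of_not_SP (μ : Measure ℝ) [IsFiniteMeasure μ]
    (h : ¬ HasSP μ) :
    ∃ A : Set ℝ, IsCompact A ∧ 0 < μ A ∧ volume A = 0 := by
  by_contra hc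
  push_neg at hc
  apply h
  -- claim: μ ≪ volume
  have hs : μ.singularPart volume = 0 := by
    by_contra hs
    obtain ⟨S, hSm, hS0, hSc⟩ := (μ.mutuallySingular_singularPart volume).symm
    -- singularPart S > 0
    have hpos : 0 < μ.singularPart volume S := by
      rcases eq_or_lt_of_le (zero_le : 0 ≤ μ.singularPart volume S) with he | hl
      · exfalso
        apply hs
        have : μ.singularPart volume Set.univ = 0 := by
          have : (Set.univ : Set ℝ) = S ∪ Sᶜ := by simp
          rw [this]
          refine le_antisymm (le_trans (measure_union_le _ _) ?_) zero_le
          rw [← he, hSc]; simp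
        ext t ht
        simp only [Measure.coe_zero, Pi.zero_apply]
        exact le_antisymm (le_trans (measure_mono (Set.subset_univ t)) this.le) zero_le
      · exact hl
    obtain ⟨K, hKS, hKc, hKpos⟩ :=
      MeasurableSet.exists_lt_isCompact hSm hpos
    have hμK : 0 < μ K :=
      lt_of_lt_of_le hKpos (Measure.singularPart_le μ volume K)
    exact hc K hKc hμK (measure_mono_null hKS hS0)
  have hac : μ ≪ volume := by
    have := μ.haveLebesgueDecomposition_add volume
    rw [hs, zero_add] at this
    rw [this]
    exact withDensity_absolutelyContinuous _ _
  intro A hA hμA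
  have hvA : 0 < volume A := by
    rcases eq_or_lt_of_le (zero_le : 0 ≤ volume A) with he | hl
    · exact absurd (hac he.symm) hμA.ne'
    · exact hl
  have := Measure.sub_mem_nhds_zero_of_addHaar_pos (volume : Measure ℝ) A hA hvA
  rcases Metric.mem_nhds_iff.mp this with ⟨ε, hε, hball⟩
  refine ⟨ε, hε, fun x hx => hball ?_⟩
  rw [Metric.mem_ball, Real.dist_eq, sub_zero, abs_lt]
  exact ⟨hx.1, hx.2⟩
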